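/- Consider the recursions σ²_{i+1} = (1 + h²α²γ_i²σ_i²/σ²)^{-1} σ_i² with σ_1² = σ²/(P h²), and σ²_{i+1}(H) = (1 + H²α²γ_i²σ_i²(H)/σ²)^{-1} σ_i²(H) with σ_1²(H) = σ²/(P H²). If 0 < H ≤ |h|, then σ_i² ≤ σ_i²(H) for all i ≥ 1. -/

import Mathlib

/-- Monotonicity of the variance recursion: if `0 < H ≤ |h|`, then the variance sequence
`σ_i²` driven by the true gain `h` is dominated by the pessimistic sequence `σ_i²(H)`. -/
theorem variance_recursion_monotone
    (P σ2 α : ℝ) (hP : 0 < P) (hσ2 : 0 < σ2) (hα : 0 < α)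
    (γ : ℕ → ℝ) (h H : ℝ) (hh : h ≠ 0) (hH : 0 < H) (hHh : H ≤ |h|)
    (s sH : ℕ → ℝ)
    (hspos : ∀ i, 1 ≤ i → 0 < s i) (hsHpos : ∀ i, 1 ≤ i → 0 < sH i)
    (hs1 : s 1 = σ2 / (P * h ^ 2)) (hsH1 : sH 1 = σ2 / (P * H ^ 2))
    (hsrec : ∀ i, 1 ≤ i →
      s (i + 1) = (1 + h ^ 2 * α ^ 2 * (γ i) ^ 2 * s i / σ2)⁻¹ * s i)
    (hsHrec : ∀ i, 1 ≤ i →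
      sH (i + 1) = (1 + H ^ 2 * α ^ 2 * (γ i) ^ 2 * sH i / σ2)⁻¹ * sH i) :
    ∀ i, 1 ≤ i → s i ≤ sH i := by
  have hH2h2 : H ^ 2 ≤ h ^ 2 := by
    have := sq_abs h
    nlinarith [abs_nonneg h]
  intro i hi
  induction i with
  | zero => omega
  | succ n ih =>
    rcases Nat.eq_or_lt_of_le hi with h1 | h1
    · -- n + 1 = 1, base case
      have hn : n = 0 := by omega
      subst hn
      rw [hs1, hsH1]
      apply div_le_div_of_nonneg_left (le_of_lt hσ2) (by positivity)
      apply mul_le_mul_of_nonneg_left hH2h2 (le_of_lt hP)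
    · have hn : 1 ≤ n := by omega
      have hle := ih hn
      rw [hsrec n hn, hsHrec n hn]
      set x := s n with hx
      set y := sH n with hy
      have hxpos : 0 < x := hspos n hn
      have hypos : 0 < y := hsHpos n hn
      have hA : (0:ℝ) ≤ H ^ 2 * α ^ 2 * (γ n) ^ 2 := by positivity
      have hAB : H ^ 2 * α ^ 2 * (γ n) ^ 2 ≤ h ^ 2 * α ^ 2 * (γ n) ^ 2 :=
        mul_le_mul_of_nonneg_right (mul_le_mul_of_nonneg_right hH2h2 (sq_nonneg α)) (sq_nonneg (γ n))
      have hd1 : (0:ℝ) < 1 + h ^ 2 * α ^ 2 * (γ n) ^ 2 * x / σ2 := by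
        have : (0:ℝ) ≤ h ^ 2 * α ^ 2 * (γ n) ^ 2 * x / σ2 := by positivity
        linarith
      have hd2 : (0:ℝ) < 1 + H ^ 2 * α ^ 2 * (γ n) ^ 2 * y / σ2 := by
        have : (0:ℝ) ≤ H ^ 2 * α ^ 2 * (γ n) ^ 2 * y / σ2 := by positivity
        linarith
      rw [inv_mul_eq_div, inv_mul_eq_div, div_le_div_iff₀ hd1 hd2]
      have key : H ^ 2 * α ^ 2 * (γ n) ^ 2 * x * y ≤ h ^ 2 * α ^ 2 * (γ n) ^ 2 * x * y := by
        nlinarith [mul_le_mul_of_nonneg_right hAB (mul_nonneg hxpos.le hypos.le)]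
      field_simp
      nlinarith [mul_le_mul_of_nonneg_left key hσ2.le,
        mul_le_mul_of_nonneg_left hle (mul_pos hσ2 hσ2).le]
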